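/- Suppose σ_i ≥ 1 for all 1 ≤ i ≤ r, and suppose k > 1 is such that σ_k is tight, i.e., σ_k = 1 + σ_1 + ⋯ + σ_{k−1}. Then the vector v = −e_k + e_{k−1} + ⋯ + e_2 + 2e_1 lies in L and is irreducible. -/

import Mathlib

open Finset

/-- The standard basis vector `e j` of `ℤ^{r+2}`, realised as a function
`ℤ → ℤ` (only indices `-1, 0, 1, …, r` are used). -/
def stdE (j : ℤ) : ℤ → ℤ := fun i => if i = j then 1 else 0

/-- The vector `σ = e₀ + σ₁e₁ + ⋯ + σᵣeᵣ`. -/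
def sigmaVec (r : ℤ) (σ : ℤ → ℤ) : ℤ → ℤ :=
  fun i => if i = 0 then 1 else if 1 ≤ i ∧ i ≤ r then σ i else 0

/-- The vector `ρ = e₋₁ − e₀`. -/
def rhoVec : ℤ → ℤ := fun i => stdE (-1) i - stdE 0 i

/-- The standard inner product on `ℤ^{r+2}` (coordinates `-1, 0, 1, …, r`). -/
noncomputable def ip (r : ℤ) (x y : ℤ → ℤ) : ℤ := ∑ i ∈ Finset.Icc (-1) r, x i * y i

/-- The change-maker condition on `σ₁, …, σᵣ`:
`0 ≤ σ₁ ≤ 1` and `σ_{i−1} ≤ σ_i ≤ σ₁ + ⋯ + σ_{i−1} + 1` for `1 < i ≤ r`. -/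
def ChangeMaker (r : ℤ) (σ : ℤ → ℤ) : Prop :=
  0 ≤ σ 1 ∧ σ 1 ≤ 1 ∧ ∀ i, 1 < i → i ≤ r →
    σ (i - 1) ≤ σ i ∧ σ i ≤ (∑ j ∈ Finset.Icc 1 (i - 1), σ j) + 1

/-- Membership in the change-maker lattice
`L = {v ∈ ℤ^{r+2} : v·σ = v·ρ = 0}`. -/
def memCM (r : ℤ) (σ : ℤ → ℤ) (x : ℤ → ℤ) : Prop :=
  (∀ i, i ∉ Finset.Icc (-1) r → x i = 0) ∧
    ip r x (sigmaVec r σ) = 0 ∧ ip r x rhoVec = 0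

/-- A vector `v ∈ L` is irreducible if there are no nonzero `x, y ∈ L` with
`v = x + y` and `x·y ≥ 0`. -/
def IrredCM (r : ℤ) (σ : ℤ → ℤ) (v : ℤ → ℤ) : Prop :=
  ¬ ∃ x y : ℤ → ℤ, memCM r σ x ∧ memCM r σ y ∧ x ≠ 0 ∧ y ≠ 0 ∧
    v = x + y ∧ 0 ≤ ip r x y

/-- A subset `S` of `ℤ^{r+2}` is indecomposable if it is not an orthogonal
direct sum of two nonzero subgroups. -/
def IndecompCM (r : ℤ) (S : Set (ℤ → ℤ)) : Prop :=
  ¬ ∃ L1 L2 : AddSubgroup (ℤ → ℤ), (L1 : Set (ℤ → ℤ)) ⊆ S ∧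
    (L2 : Set (ℤ → ℤ)) ⊆ S ∧ L1 ≠ ⊥ ∧ L2 ≠ ⊥ ∧ L1 ⊓ L2 = ⊥ ∧
    (∀ x ∈ S, ∃ a ∈ L1, ∃ b ∈ L2, x = a + b) ∧
    (∀ x ∈ L1, ∀ y ∈ L2, ip r x y = 0)

lemma myA (n : ℤ) : n ≤ n * n := by
  rcases le_or_gt n 0 with h | h
  · nlinarith [mul_self_nonneg n]
  · nlinarith

lemma myB (n : ℤ) : -n ≤ n * n := by
  have h := myA (-n); rw [neg_mul_neg] at h; linarith

lemma myC (n : ℤ) (h : n * n - n ≤ 1) : n = 0 ∨ n = 1 := by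
  have h1 : 0 ≤ n := by nlinarith [mul_self_nonneg (n+1)]
  have h2 : n ≤ 1 := by nlinarith [mul_self_nonneg (n-2)]
  omega

lemma myE (n : ℤ) (h : n ≠ 0) : 1 ≤ n * n := by
  rcases lt_or_gt_of_ne h with h | h
  · nlinarith
  · nlinarith

lemma myD (n : ℤ) (h : n * n + n ≤ 1) : n = 0 ∨ n = -1 := by
  have := myC (-n) (by nlinarith)
  omega

lemma sum_split (r k : ℤ) (hk : 1 < k) (hkr : k ≤ r) (f : ℤ → ℤ) :
    ∑ i ∈ Finset.Icc (-1) r, f i =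
      f (-1) + f 0 + f 1 + (∑ i ∈ Finset.Icc 2 (k-1), f i) + f k
        + ∑ i ∈ Finset.Icc (k+1) r, f i := by
  have h1 : Finset.Icc (-1:ℤ) r = ({-1, 0, 1} : Finset ℤ) ∪ (Finset.Icc 2 (k-1) ∪ ({k} ∪ Finset.Icc (k+1) r)) := by
    ext i
    simp only [Finset.mem_Icc, Finset.mem_union, Finset.mem_insert, Finset.mem_singleton]
    omega
  have d1 : Disjoint ({k} : Finset ℤ) (Finset.Icc (k+1) r) := by
    simp only [Finset.disjoint_left, Finset.mem_singleton, Finset.mem_Icc]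
    omega
  have d2 : Disjoint (Finset.Icc 2 (k-1)) (({k} : Finset ℤ) ∪ Finset.Icc (k+1) r) := by
    simp only [Finset.disjoint_left, Finset.mem_union, Finset.mem_singleton, Finset.mem_Icc]
    omega
  have d3 : Disjoint ({-1, 0, 1} : Finset ℤ) (Finset.Icc 2 (k-1) ∪ (({k} : Finset ℤ) ∪ Finset.Icc (k+1) r)) := by
    simp only [Finset.disjoint_left, Finset.mem_union, Finset.mem_singleton, Finset.mem_insert, Finset.mem_Icc]
    omega
  rw [h1, Finset.sum_union d3, Finset.sum_union d2, Finset.sum_union d1]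
  have : ∑ i ∈ ({-1, 0, 1} : Finset ℤ), f i = f (-1) + f 0 + f 1 := by
    rw [show ({-1, 0, 1} : Finset ℤ) = insert (-1) (insert 0 {1}) from rfl]
    rw [Finset.sum_insert (by norm_num), Finset.sum_insert (by norm_num), Finset.sum_singleton]
    ring
  rw [this, Finset.sum_singleton]
  ring

lemma sigma_mono (r : ℤ) (σ : ℤ → ℤ) (hcm : ChangeMaker r σ)
    (a b : ℤ) (ha : 1 ≤ a) (hab : a ≤ b) (hbr : b ≤ r) : σ a ≤ σ b := by
  have key : ∀ n, a ≤ n → (n ≤ r → σ a ≤ σ n) := by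
    refine Int.le_induction ?_ ?_
    · intro _; exact le_refl _
    · intro m hm ih hmr
      have h1 := (hcm.2.2 (m + 1) (by omega) hmr).1
      have h2 := ih (by omega)
      simp only [add_sub_cancel_right] at h1
      omega
  exact key b hab hbr

lemma key (r : ℤ) (σ : ℤ → ℤ) (hcm : ChangeMaker r σ)
    (hpos : ∀ i, 1 ≤ i → i ≤ r → 1 ≤ σ i)
    (k : ℤ) (hk1 : 1 < k) (hkr : k ≤ r)
    (htight : σ k = 1 + ∑ j ∈ Finset.Icc 1 (k - 1), σ j)
    (z : ℤ → ℤ) (hz : memCM r σ z)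
    (hineq : ∑ i ∈ Finset.Icc (-1) r, z i * z i
        ≤ 2 * z 1 + (∑ j ∈ Finset.Icc 2 (k-1), z j) - z k) :
    (z k = 0 ∨ z k = -1) ∧ (z k = 0 → z = 0) := by
  obtain ⟨hsupp, hσ, hρ⟩ := hz
  have hσ1 : σ 1 = 1 := le_antisymm hcm.2.1 (hpos 1 le_rfl (by omega))
  -- ρ equation
  have hρ' : z (-1) = z 0 := by
    unfold ip at hρ
    rw [sum_split r k hk1 hkr] at hρ
    have e1 : ∀ j ∈ Finset.Icc (2:ℤ) (k-1), z j * rhoVec j = 0 := by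
      intro j hj; simp only [Finset.mem_Icc] at hj
      simp [rhoVec, stdE, show j ≠ -1 by omega, show j ≠ 0 by omega]
    have e2 : ∀ j ∈ Finset.Icc (k+1) r, z j * rhoVec j = 0 := by
      intro j hj; simp only [Finset.mem_Icc] at hj
      simp [rhoVec, stdE, show j ≠ -1 by omega, show j ≠ 0 by omega]
    rw [Finset.sum_eq_zero e1, Finset.sum_eq_zero e2] at hρ
    simp [rhoVec, stdE, show k ≠ -1 by omega, show k ≠ 0 by omega] at hρ
    linarith
  -- σ equation
  have hσ' : z 0 + z 1 * σ 1 + (∑ j ∈ Finset.Icc 2 (k-1), z j * σ j)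
      + z k * σ k + (∑ j ∈ Finset.Icc (k+1) r, z j * σ j) = 0 := by
    unfold ip at hσ
    rw [sum_split r k hk1 hkr] at hσ
    have e1 : ∑ j ∈ Finset.Icc (2:ℤ) (k-1), z j * sigmaVec r σ j
        = ∑ j ∈ Finset.Icc (2:ℤ) (k-1), z j * σ j := by
      refine Finset.sum_congr rfl fun j hj => ?_
      simp only [Finset.mem_Icc] at hj
      simp [sigmaVec, show j ≠ 0 by omega, show (1:ℤ) ≤ j by omega, show j ≤ r by omega]
    have e2 : ∑ j ∈ Finset.Icc (k+1) r, z j * sigmaVec r σ j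
        = ∑ j ∈ Finset.Icc (k+1) r, z j * σ j := by
      refine Finset.sum_congr rfl fun j hj => ?_
      simp only [Finset.mem_Icc] at hj
      simp [sigmaVec, show j ≠ 0 by omega, show (1:ℤ) ≤ j by omega, show j ≤ r by omega]
    rw [e1, e2] at hσ
    simp [sigmaVec, show k ≠ 0 by omega, show (1:ℤ) ≤ k by omega, hkr,
      show (1:ℤ) ≤ r by omega] at hσ
    linarith
  -- norm inequality, split
  rw [sum_split r k hk1 hkr] at hineq
  have hB2 : ∑ j ∈ Finset.Icc (2:ℤ) (k-1), (z j * z j - z j)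
      = (∑ i ∈ Finset.Icc (2:ℤ) (k-1), z i * z i) - ∑ j ∈ Finset.Icc (2:ℤ) (k-1), z j := by
    rw [Finset.sum_sub_distrib]
  have hB2nonneg : 0 ≤ ∑ j ∈ Finset.Icc (2:ℤ) (k-1), (z j * z j - z j) :=
    Finset.sum_nonneg fun j _ => by have := myA (z j); linarith
  have hDnonneg : 0 ≤ ∑ i ∈ Finset.Icc (k+1) r, z i * z i :=
    Finset.sum_nonneg fun j _ => mul_self_nonneg _
  have hCnonneg : 0 ≤ z k * z k + z k := by have := myB (z k); linarith
  have hAlow : -1 ≤ z 1 * z 1 - 2 * z 1 := by nlinarith [mul_self_nonneg (z 1 - 1)]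
  have main : 2 * (z 0 * z 0) + (z 1 * z 1 - 2 * z 1)
      + (∑ j ∈ Finset.Icc (2:ℤ) (k-1), (z j * z j - z j)) + (z k * z k + z k)
      + (∑ i ∈ Finset.Icc (k+1) r, z i * z i) ≤ 0 := by
    rw [hρ'] at hineq
    linarith [hB2]
  have hz0 : z 0 = 0 := by
    have h2 : z 0 * z 0 ≤ 0 := by linarith
    exact mul_self_eq_zero.mp (le_antisymm h2 (mul_self_nonneg _))
  have hzk : z k = 0 ∨ z k = -1 := myD (z k) (by linarith [mul_self_nonneg (z 0)])
  refine ⟨hzk, fun hk0 => ?_⟩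
  have main2 : (z 1 * z 1 - 2 * z 1)
      + (∑ j ∈ Finset.Icc (2:ℤ) (k-1), (z j * z j - z j))
      + (∑ i ∈ Finset.Icc (k+1) r, z i * z i) ≤ 0 := by
    rw [hz0, hk0] at main
    linarith [main]
  have hmid : ∀ j ∈ Finset.Icc (2:ℤ) (k-1), z j = 0 ∨ z j = 1 := by
    intro j hj
    have hle : z j * z j - z j ≤ ∑ i ∈ Finset.Icc (2:ℤ) (k-1), (z i * z i - z i) :=
      Finset.single_le_sum (f := fun i => z i * z i - z i)
        (fun i _ => by simpa using sub_nonneg.mpr (myA (z i))) hj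
    exact myC (z j) (by linarith)
  have hmidσ : ∀ j ∈ Finset.Icc (2:ℤ) (k-1), 0 ≤ z j * σ j ∧ z j * σ j ≤ σ j := by
    intro j hj
    have hc := hmid j hj
    simp only [Finset.mem_Icc] at hj
    have hσj : 1 ≤ σ j := hpos j (by omega) (by omega)
    rcases hc with h | h <;> rw [h] <;> constructor <;> linarith
  have hS2σnonneg : 0 ≤ ∑ j ∈ Finset.Icc (2:ℤ) (k-1), z j * σ j :=
    Finset.sum_nonneg fun j hj => (hmidσ j hj).1
  have hAnonneg : 0 ≤ z 1 := by
    nlinarith [mul_self_nonneg (z 1 + 1), main2, hB2nonneg, hDnonneg]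
  have hD1 : ∑ i ∈ Finset.Icc (k+1) r, z i * z i ≤ 1 := by linarith
  rcases eq_or_lt_of_le hDnonneg with hD0 | hDpos
  · -- tail sum of squares is 0
    have hD0' : ∑ i ∈ Finset.Icc (k+1) r, z i * z i = 0 := hD0.symm
    have htail : ∀ j ∈ Finset.Icc (k+1) r, z j = 0 := by
      intro j hj
      exact mul_self_eq_zero.mp
        ((Finset.sum_eq_zero_iff_of_nonneg (fun i _ => mul_self_nonneg (z i))).mp hD0' j hj)
    have hPzero : ∑ j ∈ Finset.Icc (k+1) r, z j * σ j = 0 :=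
      Finset.sum_eq_zero fun j hj => by rw [htail j hj]; ring
    rw [hz0, hk0, hσ1, hPzero] at hσ'
    have hA0 : z 1 = 0 := by linarith
    have hS2σ0 : ∑ j ∈ Finset.Icc (2:ℤ) (k-1), z j * σ j = 0 := by linarith
    have hmid0 : ∀ j, 2 ≤ j → j ≤ k - 1 → z j = 0 := by
      intro j h2j hjk
      have hjmem : j ∈ Finset.Icc (2:ℤ) (k-1) := by simp only [Finset.mem_Icc]; omega
      have h := (Finset.sum_eq_zero_iff_of_nonneg (fun i hi => (hmidσ i hi).1)).mp hS2σ0 j hjmem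
      have hσj : 1 ≤ σ j := hpos j (by omega) (by omega)
      rcases mul_eq_zero.mp h with h' | h'
      · exact h'
      · omega
    funext i
    simp only [Pi.zero_apply]
    by_cases hi : i ∈ Finset.Icc (-1:ℤ) r
    · simp only [Finset.mem_Icc] at hi
      obtain h|h|h|h|h|h : i = -1 ∨ i = 0 ∨ i = 1 ∨ (2 ≤ i ∧ i ≤ k-1) ∨ i = k ∨ (k+1 ≤ i ∧ i ≤ r) := by omega
      · rw [h, hρ', hz0]
      · rw [h]; exact hz0
      · rw [h]; exact hA0
      · exact hmid0 i h.1 h.2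
      · rw [h]; exact hk0
      · exact htail i (by simp only [Finset.mem_Icc]; omega)
    · exact hsupp i hi
  · exfalso
    have hDeq1 : ∑ i ∈ Finset.Icc (k+1) r, z i * z i = 1 := le_antisymm hD1 hDpos
    have hA1 : z 1 = 1 := by
      have h1 : (z 1 - 1) * (z 1 - 1) ≤ 0 := by nlinarith [main2, hB2nonneg]
      have h2 := mul_self_eq_zero.mp (le_antisymm h1 (mul_self_nonneg _))
      omega
    obtain ⟨m, hm, hzm⟩ : ∃ m ∈ Finset.Icc (k+1) r, z m ≠ 0 := by
      by_contra hcon; push_neg at hcon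
      have h0 : ∑ i ∈ Finset.Icc (k+1) r, z i * z i = 0 :=
        Finset.sum_eq_zero fun j hj => by rw [hcon j hj]; ring
      linarith
    have hmk : k + 1 ≤ m ∧ m ≤ r := by simpa [Finset.mem_Icc] using hm
    have hmsq : z m * z m = 1 := by
      have h1 : z m * z m ≤ ∑ i ∈ Finset.Icc (k+1) r, z i * z i :=
        Finset.single_le_sum (f := fun i => z i * z i) (fun i _ => mul_self_nonneg _) hm
      have h2 : 1 ≤ z m * z m := myE (z m) hzm
      linarith
    have hrest : ∀ j ∈ Finset.Icc (k+1) r, j ≠ m → z j = 0 := by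
      intro j hj hjm
      have hsum : ∑ i ∈ (Finset.Icc (k+1) r).erase m, z i * z i = 0 := by
        have h := Finset.add_sum_erase _ (fun i => z i * z i) hm
        linarith
      exact mul_self_eq_zero.mp
        ((Finset.sum_eq_zero_iff_of_nonneg (fun i _ => mul_self_nonneg (z i))).mp hsum j
          (Finset.mem_erase.mpr ⟨hjm, hj⟩))
    have hP : ∑ j ∈ Finset.Icc (k+1) r, z j * σ j = z m * σ m := by
      rw [← Finset.add_sum_erase _ (fun j => z j * σ j) hm]
      rw [Finset.sum_eq_zero fun j hj => by
        rw [hrest j (Finset.mem_of_mem_erase hj) (Finset.ne_of_mem_erase hj)]; ring]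
      ring
    rw [hz0, hk0, hσ1, hP] at hσ'
    have hσm : 1 ≤ σ m := hpos m (by omega) (by omega)
    rcases mul_self_eq_one_iff.mp hmsq with h1 | h1
    · rw [h1] at hσ'
      linarith [hS2σnonneg]
    · rw [h1] at hσ'
      have hS2le : (∑ j ∈ Finset.Icc (2:ℤ) (k-1), z j * σ j) ≤ ∑ j ∈ Finset.Icc (2:ℤ) (k-1), σ j :=
        Finset.sum_le_sum fun j hj => (hmidσ j hj).2
      have hmono := sigma_mono r σ hcm k m (by omega) (by omega) (by omega)
      have hsplit : ∑ j ∈ Finset.Icc (1:ℤ) (k-1), σ j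
          = σ 1 + ∑ j ∈ Finset.Icc (2:ℤ) (k-1), σ j := by
        rw [show Finset.Icc (1:ℤ) (k-1) = insert 1 (Finset.Icc 2 (k-1)) from by
          ext i
          simp only [Finset.mem_Icc, Finset.mem_insert]
          omega]
        rw [Finset.sum_insert (by simp)]
      linarith [htight, hA1]

lemma icc_split1 (k : ℤ) (hk : 1 < k) (σ : ℤ → ℤ) :
    ∑ j ∈ Finset.Icc (1:ℤ) (k-1), σ j = σ 1 + ∑ j ∈ Finset.Icc (2:ℤ) (k-1), σ j := by
  rw [show Finset.Icc (1:ℤ) (k-1) = insert 1 (Finset.Icc 2 (k-1)) from by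
    ext i
    simp only [Finset.mem_Icc, Finset.mem_insert]
    omega]
  rw [Finset.sum_insert (by simp)]

/-- Suppose `σᵢ ≥ 1` for all `1 ≤ i ≤ r` and `σ_k` is tight for some `k > 1`,
i.e. `σ_k = 1 + σ₁ + ⋯ + σ_{k−1}`.  Then the vector
`v = −e_k + e_{k−1} + ⋯ + e₂ + 2e₁` lies in `L` and is irreducible. -/
theorem stmt12 (r : ℤ) (hr : 1 ≤ r) (σ : ℤ → ℤ) (hcm : ChangeMaker r σ)
    (hpos : ∀ i, 1 ≤ i → i ≤ r → 1 ≤ σ i)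
    (k : ℤ) (hk1 : 1 < k) (hkr : k ≤ r)
    (htight : σ k = 1 + ∑ j ∈ Finset.Icc 1 (k - 1), σ j)
    (v : ℤ → ℤ)
    (hv : v = fun i =>
      -(stdE k i) + (∑ j ∈ Finset.Icc 2 (k - 1), stdE j i) + 2 * stdE 1 i) :
    memCM r σ v ∧ IrredCM r σ v := by
  have hσ1 : σ 1 = 1 := le_antisymm hcm.2.1 (hpos 1 le_rfl hr)
  have hvco : ∀ i : ℤ, v i = (if i = k then -1 else 0)
      + (if 2 ≤ i ∧ i ≤ k-1 then 1 else 0) + (if i = 1 then 2 else 0) := by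
    intro i
    simp only [hv, stdE]
    rw [Finset.sum_ite_eq]
    simp only [Finset.mem_Icc]
    split_ifs <;> ring
  have hvm1 : v (-1) = 0 := by
    rw [hvco]
    norm_num [show (-1:ℤ) ≠ k by omega, show ¬(2 ≤ (-1:ℤ) ∧ (-1:ℤ) ≤ k-1) by omega]
  have hv0 : v 0 = 0 := by
    rw [hvco]
    norm_num [show (0:ℤ) ≠ k by omega, show ¬(2 ≤ (0:ℤ) ∧ (0:ℤ) ≤ k-1) by omega]
  have hv1 : v 1 = 2 := by
    rw [hvco]
    norm_num [show (1:ℤ) ≠ k by omega, show ¬(2 ≤ (1:ℤ) ∧ (1:ℤ) ≤ k-1) by omega]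
  have hvmid : ∀ j, 2 ≤ j → j ≤ k - 1 → v j = 1 := by
    intro j h1 h2
    rw [hvco]
    norm_num [h1, h2, show j ≠ k by omega, show j ≠ 1 by omega]
  have hvk : v k = -1 := by
    rw [hvco]
    norm_num [show ¬(2 ≤ k ∧ k ≤ k-1) by omega, show k ≠ 1 by omega]
  have hvout : ∀ j, j ≠ k → j ≠ 1 → ¬(2 ≤ j ∧ j ≤ k-1) → v j = 0 := by
    intro j h1 h2 h3
    rw [hvco]
    norm_num [h1, h2, h3]
    intro h4; omega
  have hσvm1 : sigmaVec r σ (-1) = 0 := by norm_num [sigmaVec]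
  have hσv0 : sigmaVec r σ 0 = 1 := by norm_num [sigmaVec]
  have hσv : ∀ j : ℤ, 1 ≤ j → j ≤ r → sigmaVec r σ j = σ j := by
    intro j h1 h2
    simp [sigmaVec, show j ≠ 0 by omega, h1, h2]
  have hρm1 : rhoVec (-1) = 1 := by norm_num [rhoVec, stdE]
  have hρ0 : rhoVec 0 = -1 := by norm_num [rhoVec, stdE]
  have hρout : ∀ j : ℤ, j ≠ -1 → j ≠ 0 → rhoVec j = 0 := by
    intro j h1 h2
    simp [rhoVec, stdE, h1, h2]
  have hmem : memCM r σ v := by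
    refine ⟨?_, ?_, ?_⟩
    · intro i hi
      simp only [Finset.mem_Icc, not_and, not_le] at hi
      exact hvout i (by omega) (by omega) (by omega)
    · unfold ip
      rw [sum_split r k hk1 hkr]
      rw [hvm1, hv0, hv1, hvk]
      rw [Finset.sum_congr rfl (fun j hj => by
        simp only [Finset.mem_Icc] at hj
        rw [hvmid j hj.1 hj.2, one_mul, hσv j (by omega) (by omega)])]
      rw [Finset.sum_eq_zero (s := Finset.Icc (k+1) r) (f := fun j => v j * sigmaVec r σ j)
        (fun j hj => by
        simp only [Finset.mem_Icc] at hj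
        show v j * sigmaVec r σ j = 0
        rw [hvout j (by omega) (by omega) (by omega), zero_mul])]
      rw [hσvm1, hσv0, hσv 1 le_rfl hr, hσv k (by omega) hkr]
      rw [htight, icc_split1 k hk1 σ, hσ1]
      ring
    · unfold ip
      rw [sum_split r k hk1 hkr]
      rw [hvm1, hv0, hv1, hvk]
      rw [Finset.sum_eq_zero (s := Finset.Icc 2 (k-1)) (f := fun j => v j * rhoVec j)
        (fun j hj => by
        simp only [Finset.mem_Icc] at hj
        show v j * rhoVec j = 0
        rw [hρout j (by omega) (by omega), mul_zero])]
      rw [Finset.sum_eq_zero (s := Finset.Icc (k+1) r) (f := fun j => v j * rhoVec j)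
        (fun j hj => by
        simp only [Finset.mem_Icc] at hj
        show v j * rhoVec j = 0
        rw [hρout j (by omega) (by omega), mul_zero])]
      rw [hρm1, hρ0, hρout 1 (by omega) (by omega), hρout k (by omega) (by omega)]
      ring
  refine ⟨hmem, ?_⟩
  rintro ⟨x, y, hx, hy, hx0, hy0, hvxy, hipxy⟩
  have hadd : ∀ i, v i = x i + y i := fun i => by rw [hvxy]; rfl
  have hvxcomp : ∀ w : ℤ → ℤ, ∑ i ∈ Finset.Icc (-1) r, v i * w i
      = 2 * w 1 + (∑ j ∈ Finset.Icc 2 (k-1), w j) - w k := by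
    intro w
    rw [sum_split r k hk1 hkr]
    rw [hvm1, hv0, hv1, hvk]
    rw [Finset.sum_congr rfl (fun j hj => by
      simp only [Finset.mem_Icc] at hj
      rw [hvmid j hj.1 hj.2, one_mul])]
    rw [Finset.sum_eq_zero (s := Finset.Icc (k+1) r) (f := fun j => v j * w j)
      (fun j hj => by
      simp only [Finset.mem_Icc] at hj
      show v j * w j = 0
      rw [hvout j (by omega) (by omega) (by omega), zero_mul])]
    ring
  have hineqx : ∑ i ∈ Finset.Icc (-1) r, x i * x i
      ≤ 2 * x 1 + (∑ j ∈ Finset.Icc 2 (k-1), x j) - x k := by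
    have h1 : ∑ i ∈ Finset.Icc (-1) r, v i * x i
        = (∑ i ∈ Finset.Icc (-1) r, x i * x i) + ip r x y := by
      unfold ip
      rw [← Finset.sum_add_distrib]
      refine Finset.sum_congr rfl fun i _ => ?_
      rw [hadd i]; ring
    rw [hvxcomp x] at h1
    linarith
  have hineqy : ∑ i ∈ Finset.Icc (-1) r, y i * y i
      ≤ 2 * y 1 + (∑ j ∈ Finset.Icc 2 (k-1), y j) - y k := by
    have h1 : ∑ i ∈ Finset.Icc (-1) r, v i * y i
        = (∑ i ∈ Finset.Icc (-1) r, y i * y i) + ip r x y := by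
      unfold ip
      rw [← Finset.sum_add_distrib]
      refine Finset.sum_congr rfl fun i _ => ?_
      rw [hadd i]; ring
    rw [hvxcomp y] at h1
    linarith
  have kx := key r σ hcm hpos k hk1 hkr htight x hx hineqx
  have ky := key r σ hcm hpos k hk1 hkr htight y hy hineqy
  have hksum : x k + y k = -1 := by
    have := hadd k
    rw [hvk] at this
    linarith
  rcases kx.1 with h | h
  · exact hx0 (kx.2 h)
  · have hyk : y k = 0 := by
      rcases ky.1 with h' | h' <;> omega
    exact hy0 (ky.2 hyk)
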